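/- Let ζ ∈ ℕ_* and let μ be a Borel probability measure on [0,1] such that ∫_{[0,1]} (1−v)^{N−ζ} dμ(v) = 1/C(N,ζ) for every integer N ≥ ζ, where C(N,ζ) = N!/(ζ!(N−ζ)!). Then μ is the unique measure with cumulative distribution function F(v) = v^ζ on [0,1]; that is, μ([0,v]) = v^ζ for all v ∈ [0,1] (equivalently, μ has density ζ v^{ζ−1} with respect to Lebesgue measure on [0,1]). -/

import Mathlib

open MeasureTheory

lemma fact_prod_nat (m k : ℕ) :
    m.factorial * ∏ j ∈ Finset.range (k+1), (m+1+j) = (m+k+1).factorial := by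
  induction k with
  | zero => simp [Nat.factorial_succ, Nat.mul_comm]
  | succ k ih =>
      rw [Finset.prod_range_succ, ← mul_assoc, ih]
      have h1 : m + (k+1) + 1 = (m + k + 1) + 1 := by omega
      have h2 : m + 1 + (k+1) = (m + k + 1) + 1 := by omega
      rw [h1, h2, Nat.factorial_succ (m+k+1), Nat.mul_comm]

lemma beta_nat (m k : ℕ) :
    ∫ x in (0:ℝ)..1, x ^ m * (1 - x) ^ k
      = (m.factorial * k.factorial : ℝ) / ((m + k + 1).factorial) := by
  have hu : 0 < Complex.re ((m:ℂ) + 1) := by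
    simp only [Complex.add_re, Complex.natCast_re, Complex.one_re]
    positivity
  have h := Complex.betaIntegral_eval_nat_add_one_right hu k
  have hL : Complex.betaIntegral ((m:ℂ)+1) ((k:ℂ)+1)
      = ((∫ x in (0:ℝ)..1, x ^ m * (1 - x) ^ k : ℝ) : ℂ) := by
    rw [Complex.betaIntegral, ← intervalIntegral.integral_ofReal]
    refine intervalIntegral.integral_congr fun x hx => ?_
    have e1 : ((m:ℂ)+1) - 1 = ((m:ℕ) : ℂ) := by ring
    have e2 : ((k:ℂ)+1) - 1 = ((k:ℕ) : ℂ) := by ring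
    rw [e1, e2, Complex.cpow_natCast, Complex.cpow_natCast]
    push_cast
    ring
  have hprod : (m.factorial : ℂ) * ∏ j ∈ Finset.range (k+1), ((m:ℂ)+1+(j:ℕ))
      = ((m+k+1).factorial : ℂ) := by
    exact_mod_cast fact_prod_nat m k
  have hfm : (m.factorial : ℂ) ≠ 0 := by exact_mod_cast m.factorial_ne_zero
  have hfmk : ((m+k+1).factorial : ℂ) ≠ 0 := by exact_mod_cast (m+k+1).factorial_ne_zero
  have hprod_ne : ∏ j ∈ Finset.range (k+1), ((m:ℂ)+1+(j:ℕ)) ≠ 0 := by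
    intro h0
    rw [h0, mul_zero] at hprod
    exact hfmk hprod.symm
  have key : ((∫ x in (0:ℝ)..1, x ^ m * (1 - x) ^ k : ℝ) : ℂ)
      = ((m.factorial * k.factorial : ℝ) / ((m + k + 1).factorial) : ℝ) := by
    rw [← hL, h]
    push_cast
    push_cast at hprod
    field_simp
    rw [← hprod]; ring
  exact_mod_cast key

open scoped NNReal ENNReal

open scoped NNReal ENNReal

/-- Hausdorff moment problem identity: if a Borel probability measure `μ`
on `[0,1]` satisfies `∫ (1-v)^(N-ζ) dμ(v) = 1 / C(N,ζ)` for every `N ≥ ζ`,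
then `μ` is the Beta(ζ,1) distribution, i.e. its CDF is `F(v) = v^ζ`:
`μ([0,v]) = v^ζ` for all `v ∈ [0,1]`. -/
theorem hausdorff_moment_problem_beta (ζ : ℕ) (hζ : 0 < ζ)
    (μ : Measure ℝ) [IsProbabilityMeasure μ]
    (hsupp : μ (Set.Icc (0 : ℝ) 1) = 1)
    (hmom : ∀ N : ℕ, ζ ≤ N →
      ∫ v in Set.Icc (0 : ℝ) 1, (1 - v) ^ (N - ζ) ∂μ = 1 / (N.choose ζ : ℝ)) :
    ∀ v ∈ Set.Icc (0 : ℝ) 1, μ (Set.Icc 0 v) = ENNReal.ofReal (v ^ ζ) := by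
  intro v hv
  obtain ⟨hv0, hv1⟩ := hv
  set S : Set ℝ := Set.Icc (0:ℝ) 1 with hS
  have hSm : MeasurableSet S := measurableSet_Icc
  set w : ℝ → ℝ≥0 := fun x => Real.toNNReal ((ζ:ℝ) * x^(ζ-1)) with hw
  have hwm : Measurable w := (measurable_const.mul (measurable_id.pow_const _)).real_toNNReal
  set ν : Measure ℝ := (volume.restrict S).withDensity (fun x => (w x : ℝ≥0∞)) with hν
  set μ' : Measure ℝ := μ.restrict S with hμ'
  have hcastζ : ((ζ - 1 : ℕ) : ℝ) + 1 = (ζ : ℝ) := by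
    exact_mod_cast Nat.succ_pred_eq_of_pos hζ
  -- ν of intervals
  have hICC : ∀ u : ℝ, 0 ≤ u → u ≤ 1 → ν (Set.Icc 0 u) = ENNReal.ofReal (u ^ ζ) := by
    intro u hu0 hu1
    rw [hν, withDensity_apply _ measurableSet_Icc, Measure.restrict_restrict measurableSet_Icc]
    have hint : Set.Icc (0:ℝ) u ∩ S = Set.Icc 0 u := by
      rw [hS, Set.Icc_inter_Icc]
      simp [min_eq_left hu1]
    rw [hint]
    have hcont : Continuous (fun x : ℝ => (ζ:ℝ) * x^(ζ-1)) := by continuity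
    have hInt : IntegrableOn (fun x : ℝ => (ζ:ℝ) * x^(ζ-1)) (Set.Icc 0 u) volume :=
      hcont.integrableOn_Icc
    have hnn : 0 ≤ᵐ[volume.restrict (Set.Icc (0:ℝ) u)] fun x => (ζ:ℝ) * x^(ζ-1) := by
      filter_upwards [ae_restrict_mem measurableSet_Icc] with x hx
      have hx0 : (0:ℝ) ≤ x := hx.1
      positivity
    have hlint : ∫⁻ x in Set.Icc (0:ℝ) u, ((w x : ℝ≥0∞)) ∂volume
        = ENNReal.ofReal (∫ x in Set.Icc (0:ℝ) u, (ζ:ℝ) * x^(ζ-1) ∂volume) := by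
      rw [ofReal_integral_eq_lintegral_ofReal hInt hnn]
      rfl
    rw [hlint]
    congr 1
    rw [integral_Icc_eq_integral_Ioc, ← intervalIntegral.integral_of_le hu0,
      intervalIntegral.integral_const_mul, integral_pow]
    have hz : ζ - 1 + 1 = ζ := by omega
    rw [hz, hcastζ, zero_pow (by omega : ζ ≠ 0)]
    have hζR : (ζ : ℝ) ≠ 0 := by positivity
    field_simp
    rw [sub_zero]
  have hν_compl : ν Sᶜ = 0 := by
    rw [hν, withDensity_apply _ hSm.compl, Measure.restrict_restrict hSm.compl]
    simp
  have hνS : ν S = 1 := by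
    have := hICC 1 zero_le_one le_rfl
    rw [hS]
    simpa using this
  haveI instν : IsProbabilityMeasure ν := by
    constructor
    rw [← measure_add_measure_compl hSm, hνS, hν_compl, add_zero]
  haveI instμ' : IsProbabilityMeasure μ' := by
    constructor
    rw [hμ', Measure.restrict_apply_univ, hsupp]
  have haeμ' : ∀ᵐ x ∂μ', x ∈ S := ae_restrict_mem hSm
  have haeν : ∀ᵐ x ∂ν, x ∈ S :=
    (withDensity_absolutelyContinuous _ _).ae_le (ae_restrict_mem hSm)
  have hIntCont : ∀ (ρ : Measure ℝ) [IsFiniteMeasure ρ], (∀ᵐ x ∂ρ, x ∈ S) →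
      ∀ g : ℝ → ℝ, Continuous g → Integrable g ρ := by
    intro ρ _ hae g hg
    obtain ⟨C, hC⟩ :=
      (isCompact_Icc (a := (0:ℝ)) (b := 1)).exists_bound_of_continuousOn hg.continuousOn
    exact (integrable_const C).mono' hg.aestronglyMeasurable (hae.mono fun x hx => hC x hx)
  -- moments agree
  have hmono : ∀ k : ℕ, ∫ x, (1-x)^k ∂μ' = ∫ x, (1-x)^k ∂ν := by
    intro k
    have hL : ∫ x, (1-x)^k ∂μ' = 1 / ((ζ+k).choose ζ : ℝ) := by
      have := hmom (ζ+k) (Nat.le_add_right _ _)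
      rwa [Nat.add_sub_cancel_left] at this
    have hR : ∫ x, (1-x)^k ∂ν = 1 / ((ζ+k).choose ζ : ℝ) := by
      rw [hν, integral_withDensity_eq_integral_smul hwm]
      have hcg : ∫ x in S, w x • (1-x)^k ∂volume
          = ∫ x in S, (ζ:ℝ) * (x^(ζ-1) * (1-x)^k) ∂volume := by
        refine setIntegral_congr_fun hSm fun x hx => ?_
        have hx0 : (0:ℝ) ≤ x := hx.1
        rw [hw, NNReal.smul_def, Real.coe_toNNReal _ (by positivity : (0:ℝ) ≤ (ζ:ℝ)*x^(ζ-1)),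
          smul_eq_mul]
        ring
      rw [hcg, hS, integral_Icc_eq_integral_Ioc, ← intervalIntegral.integral_of_le zero_le_one,
        intervalIntegral.integral_const_mul, beta_nat]
      have h1 : ζ - 1 + k + 1 = ζ + k := by omega
      rw [h1]
      have hch : ((ζ+k).choose ζ : ℝ) * (ζ.factorial : ℝ) * (k.factorial : ℝ)
          = ((ζ+k).factorial : ℝ) := by
        have := Nat.choose_mul_factorial_mul_factorial (Nat.le_add_right ζ k)
        rw [Nat.add_sub_cancel_left] at this
        exact_mod_cast this
      have hfζ : (ζ : ℝ) * ((ζ-1).factorial : ℝ) = (ζ.factorial : ℝ) := by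
        exact_mod_cast Nat.mul_factorial_pred hζ.ne'
      have hne1 : ((ζ+k).factorial : ℝ) ≠ 0 := by exact_mod_cast (ζ+k).factorial_ne_zero
      have hne2 : (((ζ+k).choose ζ : ℕ) : ℝ) ≠ 0 := by
        exact Nat.cast_ne_zero.mpr (Nat.choose_pos (Nat.le_add_right ζ k)).ne'
      field_simp
      linear_combination (↑k.factorial * ↑((ζ+k).choose ζ) : ℝ) * hfζ + hch
    rw [hL, hR]
  -- polynomial moments in the (1-x) basis
  have hIntPow : ∀ (ρ : Measure ℝ) [IsFiniteMeasure ρ], (∀ᵐ x ∂ρ, x ∈ S) →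
      ∀ i : ℕ, Integrable (fun x : ℝ => (1-x)^i) ρ := by
    intro ρ _ hae i
    exact hIntCont ρ hae _ ((continuous_const.sub continuous_id).pow i)
  have hpoly1 : ∀ p : Polynomial ℝ, ∫ x, p.eval (1-x) ∂μ' = ∫ x, p.eval (1-x) ∂ν := by
    intro p
    have hrep : ∀ x : ℝ, p.eval (1-x)
        = ∑ i ∈ Finset.range (p.natDegree+1), p.coeff i * (1-x)^i := fun x =>
      p.eval_eq_sum_range (1-x)
    simp_rw [hrep]
    rw [integral_finset_sum _ (fun i _ => (hIntPow μ' haeμ' i).const_mul _),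
      integral_finset_sum _ (fun i _ => (hIntPow ν haeν i).const_mul _)]
    refine Finset.sum_congr rfl fun i _ => ?_
    rw [integral_const_mul, integral_const_mul, hmono i]
  have hpoly : ∀ p : Polynomial ℝ, ∫ x, p.eval x ∂μ' = ∫ x, p.eval x ∂ν := by
    intro p
    have hc : ∀ x : ℝ, (p.comp (Polynomial.C 1 - Polynomial.X)).eval (1-x) = p.eval x := by
      intro x
      rw [Polynomial.eval_comp]
      simp
    have := hpoly1 (p.comp (Polynomial.C 1 - Polynomial.X))
    simp_rw [hc] at this
    exact this
  -- continuous functions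
  have hcontInt : ∀ g : ℝ → ℝ, Continuous g → ∫ x, g x ∂μ' = ∫ x, g x ∂ν := by
    intro g hg
    have hintμ := hIntCont μ' haeμ' g hg
    have hintν := hIntCont ν haeν g hg
    have habs : ∀ ε : ℝ, 0 < ε → |∫ x, g x ∂μ' - ∫ x, g x ∂ν| ≤ 2*ε := by
      intro ε hε
      obtain ⟨p, hp⟩ := exists_polynomial_near_of_continuousOn 0 1 g hg.continuousOn ε hε
      have hpc : Continuous fun x : ℝ => p.eval x := p.continuous
      have hbd : ∀ (ρ : Measure ℝ) [IsProbabilityMeasure ρ], (∀ᵐ x ∂ρ, x ∈ S) →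
          Integrable g ρ → |∫ x, g x ∂ρ - ∫ x, p.eval x ∂ρ| ≤ ε := by
        intro ρ _ hae hint
        rw [← integral_sub hint (hIntCont ρ hae _ hpc)]
        have hb := norm_integral_le_of_norm_le_const (μ := ρ) (C := ε)
          (f := fun x => g x - p.eval x) ?_
        · simpa [Real.norm_eq_abs, measure_univ] using hb
        · filter_upwards [hae] with x hx
          have := hp x hx
          rw [Real.norm_eq_abs, abs_sub_comm]
          linarith
      have h1 := hbd μ' haeμ' hintμ
      have h2 := hbd ν haeν hintν
      have h3 := hpoly p
      calc |∫ x, g x ∂μ' - ∫ x, g x ∂ν|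
          = |(∫ x, g x ∂μ' - ∫ x, p.eval x ∂μ')
              - (∫ x, g x ∂ν - ∫ x, p.eval x ∂ν)| := by rw [h3]; ring_nf
        _ ≤ |∫ x, g x ∂μ' - ∫ x, p.eval x ∂μ'| + |∫ x, g x ∂ν - ∫ x, p.eval x ∂ν| :=
            abs_sub _ _
        _ ≤ 2*ε := by linarith
    have hzero : |∫ x, g x ∂μ' - ∫ x, g x ∂ν| ≤ 0 := by
      by_contra hlt
      push_neg at hlt
      have := habs (|∫ x, g x ∂μ' - ∫ x, g x ∂ν|/4) (by linarith)
      linarith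
    have := abs_nonpos_iff.mp hzero
    linarith [sub_eq_zero.mp this]
  -- measures equal
  have hwd : μ' = ν := by
    apply ext_of_forall_lintegral_eq_of_IsFiniteMeasure
    intro f
    have hc : Continuous fun x : ℝ => ((f x : ℝ)) := NNReal.continuous_coe.comp f.continuous
    rw [lintegral_coe_eq_integral _ (hIntCont μ' haeμ' _ hc),
      lintegral_coe_eq_integral _ (hIntCont ν haeν _ hc), hcontInt _ hc]
  have hfin : μ (Set.Icc 0 v) = μ' (Set.Icc 0 v) := by
    rw [hμ', Measure.restrict_apply measurableSet_Icc]
    congr 1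
    rw [hS, Set.Icc_inter_Icc]
    simp [min_eq_left hv1]
  rw [hfin, hwd, hICC v hv0 hv1]
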